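/- Let n ≥ 3 be an integer, let k ≥ 2 be even, and let K be a field whose characteristic is zero or a prime not dividing λ_{(3,k)} = Σ_{i=0}^{k} (−1)^i (binom(k,i))^3. In the quotient ring K[X_1,…,X_n]/(X_1^{k+1},…,X_n^{k+1}), with A_i the image of X_i, the element [(∏_{i=2}^{n} (A_1 − A_i)) · (A_2 − A_3)]^k is nonzero (it equals λ_{(3,k)}·A_1^k⋯A_n^k, a nonzero multiple of the nonzero top monomial). -/

import Mathlib

open MvPolynomial Finset

private def q2 (n k : ℚ) : ℚ :=
  -116 - 784*n - 2084*n^2 - 2728*n^3 - 1760*n^4 - 448*n^5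
  + (207 + 1113*n + 2214*n^2 + 1932*n^3 + 624*n^4)*k
  + (-147 - 594*n - 792*n^2 - 348*n^3)*k^2
  + (48 + 132*n + 90*n^2)*k^3
  + (-6 - 9*n)*k^4

/-- certificate function -/
private noncomputable def gg (n k : ℕ) : ℚ :=
  (-1)^k * (((2*n).choose (k-1) : ℕ) : ℚ)^3 * q2 n k / (2*(2*(n:ℚ)+2-(k:ℚ))^3)

private lemma choose_step (N j : ℕ) (h : j + 1 ≤ N) :
    ((j:ℚ)+1) * (N.choose (j+1)) = ((N:ℚ) - j) * N.choose j := by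
  have := Nat.choose_succ_right_eq N j
  have h2 : ((N - j : ℕ) : ℚ) = (N:ℚ) - j := by
    push_cast [Nat.cast_sub (by omega : j ≤ N)]; ring
  have := congrArg (fun x : ℕ => (x : ℚ)) this
  push_cast at this
  rw [← h2]
  push_cast
  linarith [this]

private lemma choose_up (N k : ℕ) (h : k ≤ N) :
    ((N:ℚ)+1-k) * ((N+1).choose k) = ((N:ℚ)+1) * (N.choose k) := by
  cases k with
  | zero => simp
  | succ j =>
      have hp : (((N+1).choose (j+1) : ℕ) : ℚ) = (N.choose j : ℚ) + (N.choose (j+1) : ℚ) := by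
        rw [Nat.choose_succ_succ]; push_cast; ring
      have hs := choose_step N j h
      push_cast at hp ⊢
      rw [hp]
      linarith [hs]

private lemma step_id (n j : ℕ) (hj : j + 1 ≤ 2*n) :
    ((n:ℚ)+1)^2 * (-1)^(j+1) * (((2*n+2).choose (j+1) : ℕ) : ℚ)^3
      + 3*(3*(n:ℚ)+1)*(3*(n:ℚ)+2)*(-1)^(j+1) * (((2*n).choose (j+1) : ℕ) : ℚ)^3
      = gg n (j+2) - gg n (j+1) := by
  set t : ℚ := (((2*n).choose (j+1) : ℕ) : ℚ) with ht
  set u : ℚ := (((2*n).choose j : ℕ) : ℚ) with hu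
  set c1 : ℚ := (((2*n+1).choose (j+1) : ℕ) : ℚ) with hc1
  set c2 : ℚ := (((2*n+2).choose (j+1) : ℕ) : ℚ) with hc2
  have hA : (0:ℚ) < 2*(n:ℚ) - j := by
    have : (j:ℚ) + 1 ≤ 2*(n:ℚ) := by exact_mod_cast hj
    linarith
  have hB : (0:ℚ) < 2*(n:ℚ) + 1 - j := by linarith
  have hU : ((j:ℚ)+1) * t = (2*(n:ℚ) - j) * u := by
    have := choose_step (2*n) j hj
    push_cast at this ⊢; linarith [this]
  have h21 : (2*(n:ℚ) - j) * c1 = (2*(n:ℚ)+1) * t := by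
    have := choose_up (2*n) (j+1) hj
    push_cast at this ⊢; linarith [this]
  have h22 : (2*(n:ℚ) + 1 - j) * c2 = (2*(n:ℚ)+2) * c1 := by
    have := choose_up (2*n+1) (j+1) (by omega)
    push_cast at this ⊢; linarith [this]
  have hgk : gg n (j+1) = (-1)^(j+1) * u^3 * q2 n (j+1) / (2*(2*(n:ℚ)+1-j)^3) := by
    simp only [gg, Nat.add_sub_cancel, hu]
    push_cast
    ring_nf
  have hgk1 : gg n (j+2) = (-1)^j * t^3 * q2 n (j+2) / (2*(2*(n:ℚ)-j)^3) := by
    simp only [gg, show j+2-1 = j+1 from rfl, ht]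
    push_cast
    ring_nf
  rw [hgk, hgk1]
  have hu' : u = ((j:ℚ)+1) * t / (2*(n:ℚ) - j) := by
    field_simp
    linarith [hU]
  have hc1' : c1 = (2*(n:ℚ)+1) * t / (2*(n:ℚ) - j) := by
    field_simp
    linarith [h21]
  have hc2' : c2 = (2*(n:ℚ)+2) * c1 / (2*(n:ℚ)+1-j) := by
    field_simp
    linarith [h22]
  rw [hc2', hc1', hu']
  have hA' : (2*(n:ℚ) - j) ≠ 0 := ne_of_gt hA
  have hB' : (2*(n:ℚ) + 1 - j) ≠ 0 := ne_of_gt hB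
  simp only [q2]
  push_cast
  have hA2 : (n:ℚ)*2 - j ≠ 0 := by rw [mul_comm]; exact hA'
  have hB2 : (n:ℚ)*2 + 1 - j ≠ 0 := by rw [mul_comm]; exact hB'
  field_simp
  ring

private noncomputable def aQ (n : ℕ) : ℚ :=
  ∑ i ∈ range (2*n+1), (-1:ℚ)^i * (((2*n).choose i : ℕ) : ℚ)^3

private lemma aQ_rec (n : ℕ) :
    ((n:ℚ)+1)^2 * aQ (n+1) + 3*(3*(n:ℚ)+1)*(3*(n:ℚ)+2) * aQ n = 0 := by
  have hext : aQ n = ∑ i ∈ range (2*n+3),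
      (-1:ℚ)^i * (((2*n).choose i : ℕ) : ℚ)^3 := by
    rw [aQ, Finset.sum_range_succ (n := 2*n+2), Finset.sum_range_succ (n := 2*n+1)]
    rw [Nat.choose_eq_zero_of_lt (by omega), Nat.choose_eq_zero_of_lt (by omega)]
    push_cast; ring
  have ha1 : aQ (n+1) = ∑ i ∈ range (2*n+3),
      (-1:ℚ)^i * (((2*n+2).choose i : ℕ) : ℚ)^3 := by
    rw [aQ]; norm_num [show 2*(n+1)+1 = 2*n+3 from by ring, show 2*(n+1) = 2*n+2 from by ring]
  rw [hext, ha1, Finset.mul_sum, Finset.mul_sum, ← Finset.sum_add_distrib]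
  -- L k := ...
  set L : ℕ → ℚ := fun k => ((n:ℚ)+1)^2 * ((-1:ℚ)^k * (((2*n+2).choose k : ℕ) : ℚ)^3)
      + 3*(3*(n:ℚ)+1)*(3*(n:ℚ)+2) * ((-1:ℚ)^k * (((2*n).choose k : ℕ) : ℚ)^3) with hL
  show ∑ k ∈ range (2*n+3), L k = 0
  rw [Finset.sum_range_succ, Finset.sum_range_succ, Finset.sum_range_succ']
  have htel : ∑ i ∈ range (2*n), L (i+1) = gg n (2*n+1) - gg n 1 := by
    have : ∀ i ∈ range (2*n), L (i+1) = gg n (i+2) - gg n (i+1) := by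
      intro i hi
      rw [hL]
      have := step_id n i (by simpa using Finset.mem_range.mp hi)
      push_cast at this ⊢
      linarith [this]
    rw [Finset.sum_congr rfl this]
    have := Finset.sum_range_sub (fun i => gg n (i+1)) (2*n)
    simpa using this
  rw [htel]
  -- boundary values
  have hL0 : L 0 = ((n:ℚ)+1)^2 + 3*(3*(n:ℚ)+1)*(3*(n:ℚ)+2) := by
    simp [hL]
  have hL1 : L (2*n+1) = -(((n:ℚ)+1)^2 * (2*(n:ℚ)+2)^3) := by
    simp only [hL]
    rw [Nat.choose_eq_zero_of_lt (by omega : 2*n < 2*n+1)]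
    have hsym : (2*n+2).choose (2*n+1) = 2*n+2 := by
      have := Nat.choose_symm (by omega : 2*n+1 ≤ 2*n+2)
      simpa [show 2*n+2-(2*n+1) = 1 from by omega] using this.symm
    rw [hsym]
    have : (-1:ℚ)^(2*n+1) = -1 := by
      simp [pow_succ, pow_mul]
    rw [this]
    push_cast; ring
  have hL2 : L (2*n+2) = ((n:ℚ)+1)^2 := by
    simp only [hL]
    rw [Nat.choose_eq_zero_of_lt (by omega : 2*n < 2*n+2), Nat.choose_self]
    have : (-1:ℚ)^(2*n+2) = 1 := by
      simp [pow_succ, pow_mul]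
    rw [this]
    push_cast; ring
  have hg1 : gg n 1 = - q2 n 1 / (2*(2*(n:ℚ)+1)^3) := by
    simp only [gg]
    norm_num
    ring_nf
  have hg2 : gg n (2*n+1) = - q2 n (2*n+1) / 2 := by
    have hsign : (-1:ℚ)^(2*n+1) = -1 := by simp [pow_succ, pow_mul]
    simp only [gg, show 2*n+1-1 = 2*n from rfl, Nat.choose_self, hsign]
    push_cast
    ring_nf
  rw [hL0, hL1, hL2, hg1, hg2]
  have hden : (2*(n:ℚ)+1) ≠ 0 := by positivity
  simp only [q2]
  push_cast
  field_simp
  ring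

private lemma dixon_ne (m : ℕ) :
    (∑ i ∈ range (2*m+1), (-1:ℤ)^i * ((2*m).choose i : ℤ)^3) ≠ 0 := by
  induction m with
  | zero => norm_num
  | succ m ih =>
      intro h0
      apply ih
      have hcast : ∀ M : ℕ, ((∑ i ∈ range (2*M+1), (-1:ℤ)^i * ((2*M).choose i : ℤ)^3 : ℤ) : ℚ)
          = aQ M := by
        intro M
        rw [aQ]
        push_cast
        rfl
      have hrec := aQ_rec m
      rw [← hcast, ← hcast] at hrec
      have hX : ((∑ i ∈ range (2*(m+1)+1), (-1:ℤ)^i * ((2*(m+1)).choose i : ℤ)^3 : ℤ) : ℚ)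
          = 0 := by exact_mod_cast congrArg (fun x : ℤ => (x:ℚ)) h0
      rw [hX, mul_zero, zero_add] at hrec
      have hY : ((∑ i ∈ range (2*m+1), (-1:ℤ)^i * ((2*m).choose i : ℤ)^3 : ℤ) : ℚ) = 0 := by
        rcases mul_eq_zero.mp hrec with h | h
        · exfalso
          have : (0:ℚ) < 3*(3*(m:ℚ)+1)*(3*(m:ℚ)+2) := by positivity
          nlinarith [h]
        · exact h
      exact_mod_cast hY


section MvLemmas

variable {σ : Type*} [DecidableEq σ] {K : Type*} [CommRing K]

private lemma sub_pow_X (a b : σ) (k : ℕ) :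
    (X a - X b : MvPolynomial σ K)^k
      = ∑ c ∈ range (k+1),
          monomial (Finsupp.single a c + Finsupp.single b (k-c))
            ((-1:K)^(c+k) * (k.choose c : K)) := by
  rw [sub_pow]
  refine Finset.sum_congr rfl fun c hc => ?_
  rw [X_pow_eq_monomial, X_pow_eq_monomial]
  have h1 : ((-1 : MvPolynomial σ K))^(c+k) = C ((-1:K)^(c+k)) := by
    rw [map_pow, map_neg, map_one]
  have h2 : ((k.choose c : ℕ) : MvPolynomial σ K) = C ((k.choose c : ℕ) : K) := by
    rw [map_natCast]
  rw [h1, h2, C_mul_monomial, monomial_mul, mul_comm _ (C ((k.choose c : ℕ) : K)),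
    C_mul_monomial]
  congr 1
  ring

/-- `Q` does not involve the variable `j`. -/
private def MvFree (j : σ) (Q : MvPolynomial σ K) : Prop :=
  ∀ d : σ →₀ ℕ, d j ≠ 0 → coeff d Q = 0

private lemma mvFree_sub_pow (j a b : σ) (ha : j ≠ a) (hb : j ≠ b) (k : ℕ) :
    MvFree j ((X a - X b : MvPolynomial σ K)^k) := by
  intro d hd
  rw [sub_pow_X, coeff_sum]
  refine Finset.sum_eq_zero fun c hc => ?_
  rw [coeff_monomial]
  split_ifs with h
  · exfalso
    apply hd
    rw [← h]
    simp [Finsupp.single_apply, Ne.symm ha, Ne.symm hb]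
  · rfl

private lemma mvFree_mul (j : σ) (Q R : MvPolynomial σ K)
    (hQ : MvFree j Q) (hR : MvFree j R) : MvFree j (Q * R) := by
  intro d hd
  rw [coeff_mul]
  refine Finset.sum_eq_zero fun p hp => ?_
  rw [Finset.HasAntidiagonal.mem_antidiagonal] at hp
  by_cases h1 : p.1 j = 0
  · have h2 : p.2 j ≠ 0 := by
      intro h2
      apply hd
      rw [← hp]
      simp [h1, h2]
    rw [hR p.2 h2, mul_zero]
  · rw [hQ p.1 h1, zero_mul]

private lemma mvFree_one (j : σ) : MvFree j (1 : MvPolynomial σ K) := by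
  intro d hd
  rw [coeff_one]
  split_ifs with h
  · exfalso; apply hd; rw [← h]; rfl
  · rfl

private lemma mvFree_prod (j : σ) {ι : Type*} (s : Finset ι) (f : ι → MvPolynomial σ K)
    (hf : ∀ i ∈ s, MvFree j (f i)) : MvFree j (∏ i ∈ s, f i) := by
  classical
  induction s using Finset.induction_on with
  | empty => simpa using mvFree_one j
  | insert a t hnotmem ih =>
      rw [Finset.prod_insert hnotmem]
      exact mvFree_mul j _ _ (hf a (Finset.mem_insert_self a t))
        (ih fun i hi => hf i (Finset.mem_insert_of_mem hi))

private lemma peel_one (k : ℕ) (hk : Even k) (a j : σ) (hja : j ≠ a)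
    (R : MvPolynomial σ K) (hR : MvFree j R) (m : σ →₀ ℕ) (hm : m j = 0) :
    coeff (m + Finsupp.single j k) ((X a - X j)^k * R) = coeff m R := by
  have hmk : (m + Finsupp.single j k) j = k := by
    simp [Finsupp.add_apply, Finsupp.single_apply, hm]
  rw [sub_pow_X, Finset.sum_mul, coeff_sum]
  rw [Finset.sum_eq_single_of_mem 0 (Finset.mem_range.mpr (by omega))]
  · rw [coeff_monomial_mul']
    have hle : Finsupp.single a 0 + Finsupp.single j (k - 0) ≤ m + Finsupp.single j k := by
      simp only [Finsupp.single_zero, zero_add, Nat.sub_zero]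
      intro x
      simp only [Finsupp.single_apply, Finsupp.add_apply]
      split_ifs with h
      · subst h; simp [hm]
      · simp
    rw [if_pos hle]
    have hco : ((-1:K)^(0+k) * (k.choose 0 : K)) = 1 := by
      simp [hk.neg_one_pow]
    rw [hco, one_mul]
    congr 1
    ext x
    simp only [Finsupp.single_zero, zero_add, Nat.sub_zero, Finsupp.tsub_apply,
      Finsupp.add_apply, Finsupp.single_apply]
    split_ifs with h
    · subst h; simp [hm]
    · simp
  · intro c hc hc0
    rw [coeff_monomial_mul']
    split_ifs with h
    · rw [hR _ ?_, mul_zero]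
      have hck : c ≤ k := by have := Finset.mem_range.mp hc; omega
      simp only [Finsupp.tsub_apply, Finsupp.add_apply, Finsupp.single_apply]
      simp only [if_true, if_neg (Ne.symm hja), hm]
      omega
    · rfl

private lemma peel_many (k : ℕ) (hk : Even k) (a : σ) (s : Finset σ) (ha : a ∉ s)
    (R : MvPolynomial σ K) (hR : ∀ i ∈ s, MvFree i R) (m : σ →₀ ℕ)
    (hm : ∀ i ∈ s, m i = 0) :
    coeff (m + ∑ i ∈ s, Finsupp.single i k) ((∏ i ∈ s, (X a - X i)^k) * R)
      = coeff m R := by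
  classical
  induction s using Finset.induction_on generalizing R m with
  | empty => simp
  | insert j t hnotmem ih =>
      have hja : j ≠ a := by rintro rfl; exact ha (Finset.mem_insert_self _ _)
      have hat : a ∉ t := fun h => ha (Finset.mem_insert_of_mem h)
      rw [Finset.sum_insert hnotmem, Finset.prod_insert hnotmem]
      have hre : (X a - X j)^k * (∏ i ∈ t, (X a - X i)^k) * R
          = (∏ i ∈ t, (X a - X i)^k) * ((X a - X j)^k * R) := by ring
      have hmm : m + (Finsupp.single j k + ∑ i ∈ t, Finsupp.single i k)
          = (m + Finsupp.single j k) + ∑ i ∈ t, Finsupp.single i k := by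
        rw [add_assoc]
      rw [hre, hmm]
      rw [ih hat ((X a - X j)^k * R) ?_ (m + Finsupp.single j k) ?_]
      · exact peel_one k hk a j hja R (hR j (Finset.mem_insert_self _ _)) m
          (hm j (Finset.mem_insert_self _ _))
      · intro i hi
        refine mvFree_mul i _ _ ?_ (hR i (Finset.mem_insert_of_mem hi))
        refine mvFree_sub_pow i a j ?_ ?_ k
        · rintro rfl; exact hat hi
        · rintro rfl; exact hnotmem hi
      · intro i hi
        have : i ≠ j := by rintro rfl; exact hnotmem hi
        simp [Finsupp.add_apply, Finsupp.single_apply, hm i (Finset.mem_insert_of_mem hi),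
          Ne.symm this]

private lemma core3 (k : ℕ) (i0 i1 i2 : σ) (h01 : i0 ≠ i1) (h02 : i0 ≠ i2) (h12 : i1 ≠ i2) :
    coeff (Finsupp.single i0 k + Finsupp.single i1 k + Finsupp.single i2 k)
      (((X i0 - X i1)^k * ((X i0 - X i2)^k * (X i1 - X i2)^k)) : MvPolynomial σ K)
    = ∑ c ∈ range (k+1), (-1:K)^c * (k.choose c : K)^3 := by
  set m3 : σ →₀ ℕ := Finsupp.single i0 k + Finsupp.single i1 k + Finsupp.single i2 k with hm3
  have hcond : ∀ α β γ : ℕ, α ≤ k → β ≤ k → γ ≤ k →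
      (((Finsupp.single i0 γ + Finsupp.single i1 (k-γ))
        + ((Finsupp.single i0 β + Finsupp.single i2 (k-β))
            + (Finsupp.single i1 α + Finsupp.single i2 (k-α)))) = m3
        ↔ (β = k - α ∧ γ = α)) := by
    intro α β γ hα hβ hγ
    constructor
    · intro h
      have e0 := DFunLike.congr_fun h i0
      have e1 := DFunLike.congr_fun h i1
      have e2 := DFunLike.congr_fun h i2
      simp only [hm3, Finsupp.add_apply, Finsupp.single_apply, if_pos rfl, if_true,
        if_neg h01, if_neg h02, if_neg h12, if_neg (Ne.symm h01), if_neg (Ne.symm h02),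
        if_neg (Ne.symm h12)] at e0 e1 e2
      omega
    · rintro ⟨rfl, rfl⟩
      ext x
      simp only [hm3, Finsupp.add_apply, Finsupp.single_apply]
      by_cases hx0 : i0 = x <;> by_cases hx1 : i1 = x <;> by_cases hx2 : i2 = x <;>
        simp_all <;> omega
  rw [sub_pow_X, sub_pow_X, sub_pow_X]
  simp only [Finset.sum_mul, Finset.mul_sum, monomial_mul, coeff_sum, coeff_monomial]
  refine Finset.sum_congr rfl fun α hα => ?_
  have hαk : α ≤ k := by have := Finset.mem_range.mp hα; omega
  rw [Finset.sum_eq_single_of_mem (k-α) (Finset.mem_range.mpr (by omega))]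
  · rw [Finset.sum_eq_single_of_mem α hα]
    · rw [if_pos ((hcond α (k-α) α hαk (by omega) hαk).mpr ⟨rfl, rfl⟩)]
      rw [Nat.choose_symm hαk]
      obtain ⟨d, rfl⟩ : ∃ d, k = α + d := ⟨k - α, by omega⟩
      have hd : α + d - α = d := by omega
      rw [hd]
      have hsgn : (-1:K)^(α+(α+d)) * ((-1:K)^(d+(α+d)) * (-1:K)^(α+(α+d)))
          = (-1:K)^α := by
        rw [← pow_add, ← pow_add,
          show α+(α+d)+(d+(α+d)+(α+(α+d))) = α + 2*(2*α+2*d) from by ring,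
          pow_add, pow_mul, neg_one_sq, one_pow, mul_one]
      calc (-1:K)^(α+(α+d)) * ((α+d).choose α : K)
            * ((-1:K)^(d+(α+d)) * ((α+d).choose α : K)
              * ((-1:K)^(α+(α+d)) * ((α+d).choose α : K)))
          = ((-1:K)^(α+(α+d)) * ((-1:K)^(d+(α+d)) * (-1:K)^(α+(α+d))))
            * ((α+d).choose α : K)^3 := by ring
        _ = (-1:K)^α * ((α+d).choose α : K)^3 := by rw [hsgn]
    · intro γ hγ hγα
      rw [if_neg]
      intro h
      exact hγα ((hcond α (k-α) γ hαk (by omega)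
        (by have := Finset.mem_range.mp hγ; omega)).mp h).2
  · intro β hβ hβα
    refine Finset.sum_eq_zero fun γ hγ => ?_
    rw [if_neg]
    intro h
    exact hβα ((hcond α β γ hαk (by have := Finset.mem_range.mp hβ; omega)
      (by have := Finset.mem_range.mp hγ; omega)).mp h).1

end MvLemmas

/-- For `n ≥ 3`, even `k ≥ 2`, and a field `K` of characteristic zero or a prime not
dividing `λ_{(3,k)} = Σ_{i=0}^{k} (−1)^i (binom(k,i))^3`, in the quotient ring
`K[X_1,…,X_n]/(X_1^{k+1},…,X_n^{k+1})` (indices `0,…,n-1` here), the element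
`[(∏_{i=2}^{n} (A_1 − A_i)) · (A_2 − A_3)]^k` is nonzero. -/
theorem xi_ne_zero_of_char (K : Type*) [Field K] (n k : ℕ) (hn : 3 ≤ n) (hk : 2 ≤ k)
    (hkeven : Even k)
    (hchar : CharZero K ∨ ∃ p : ℕ, p.Prime ∧ CharP K p ∧
      ¬ (p : ℤ) ∣ ∑ i ∈ Finset.range (k + 1), (-1 : ℤ) ^ i * (Nat.choose k i : ℤ) ^ 3)
    (I : Ideal (MvPolynomial (Fin n) K))
    (hI : I = Ideal.span (Set.range fun i : Fin n => (X i : MvPolynomial (Fin n) K) ^ (k + 1)))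
    (A : Fin n → MvPolynomial (Fin n) K ⧸ I)
    (hA : ∀ i, A i = Ideal.Quotient.mk I (X i)) :
    ((∏ i ∈ univ.erase ⟨0, by omega⟩, (A ⟨0, by omega⟩ - A i)) *
        (A ⟨1, by omega⟩ - A ⟨2, by omega⟩)) ^ k ≠ 0 := by
  intro h0
  set i0 : Fin n := ⟨0, by omega⟩ with hi0
  set i1 : Fin n := ⟨1, by omega⟩ with hi1
  set i2 : Fin n := ⟨2, by omega⟩ with hi2
  have h01 : i0 ≠ i1 := by simp [hi0, hi1, Fin.ext_iff]
  have h02 : i0 ≠ i2 := by simp [hi0, hi2, Fin.ext_iff]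
  have h12 : i1 ≠ i2 := by simp [hi1, hi2, Fin.ext_iff]
  -- the polynomial upstairs
  set P : MvPolynomial (Fin n) K :=
    ((∏ i ∈ univ.erase i0, (X i0 - X i)) * (X i1 - X i2)) ^ k with hP
  -- the quotient element is the image of P
  have himg : ((∏ i ∈ univ.erase i0, (A i0 - A i)) * (A i1 - A i2)) ^ k
      = Ideal.Quotient.mk I P := by
    simp only [hA, hP, map_pow, map_mul, map_prod, map_sub]
  rw [himg] at h0
  have hPI : P ∈ I := (Ideal.Quotient.eq_zero_iff_mem).mp h0
  -- the top monomial
  set m0 : Fin n →₀ ℕ := ∑ i ∈ (univ : Finset (Fin n)), Finsupp.single i k with hm0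
  have hm0app : ∀ j : Fin n, m0 j = k := by
    intro j
    rw [hm0, Finsupp.finset_sum_apply]
    rw [Finset.sum_eq_single_of_mem j (Finset.mem_univ j)]
    · simp
    · intro i _ hij
      simp [Finsupp.single_apply, hij]
  -- members of I have zero coefficient at m0
  have hcoeff0 : coeff m0 P = 0 := by
    rw [hI] at hPI
    rw [Ideal.mem_span_range_iff_exists_fun] at hPI
    obtain ⟨c, hc⟩ := hPI
    rw [← hc, coeff_sum]
    refine Finset.sum_eq_zero fun i _ => ?_
    rw [X_pow_eq_monomial, coeff_mul_monomial']
    rw [if_neg]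
    rw [Finsupp.single_le_iff, hm0app i]
    omega
  -- now compute the coefficient
  set s : Finset (Fin n) := univ.filter (fun x => x ≠ i0 ∧ x ≠ i1 ∧ x ≠ i2) with hs
  have hsplit : (univ : Finset (Fin n)).erase i0 = insert i1 (insert i2 s) := by
    ext x
    simp only [Finset.mem_erase, Finset.mem_univ, and_true, Finset.mem_insert, hs,
      Finset.mem_filter, true_and]
    constructor
    · intro hx
      by_cases hx1 : x = i1
      · exact Or.inl hx1
      · by_cases hx2 : x = i2
        · exact Or.inr (Or.inl hx2)
        · exact Or.inr (Or.inr ⟨hx, hx1, hx2⟩)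
    · rintro (rfl | rfl | ⟨h, -, -⟩)
      · exact Ne.symm h01
      · exact Ne.symm h02
      · exact h
  have hi1s : i1 ∉ insert i2 s := by
    simp [Finset.mem_insert, hs, h12]
  have hi2s : i2 ∉ s := by simp [hs]
  have hi0s : i0 ∉ s := by simp [hs]
  set R : MvPolynomial (Fin n) K :=
    (X i0 - X i1)^k * ((X i0 - X i2)^k * (X i1 - X i2)^k) with hR
  have hPeq : P = (∏ i ∈ s, (X i0 - X i)^k) * R := by
    rw [hP, hsplit, Finset.prod_insert hi1s, Finset.prod_insert hi2s, mul_pow, mul_pow,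
      mul_pow, ← Finset.prod_pow, hR]
    ring
  set m3 : Fin n →₀ ℕ :=
    Finsupp.single i0 k + Finsupp.single i1 k + Finsupp.single i2 k with hm3
  have hm0split : m0 = m3 + ∑ i ∈ s, Finsupp.single i k := by
    have huniv : (univ : Finset (Fin n)) = insert i0 (insert i1 (insert i2 s)) := by
      rw [← hsplit]
      rw [Finset.insert_erase (Finset.mem_univ i0)]
    rw [hm0, huniv, Finset.sum_insert, Finset.sum_insert hi1s, Finset.sum_insert hi2s, hm3]
    · abel
    · rw [← hsplit]
      simp
  have hfreeR : ∀ i ∈ s, MvFree i R := by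
    intro i hi
    rw [hs, Finset.mem_filter] at hi
    obtain ⟨-, hni0, hni1, hni2⟩ := hi
    refine mvFree_mul i _ _ (mvFree_sub_pow i i0 i1 hni0 hni1 k) ?_
    exact mvFree_mul i _ _ (mvFree_sub_pow i i0 i2 hni0 hni2 k)
      (mvFree_sub_pow i i1 i2 hni1 hni2 k)
  have hm3s : ∀ i ∈ s, m3 i = 0 := by
    intro i hi
    rw [hs, Finset.mem_filter] at hi
    obtain ⟨-, hni0, hni1, hni2⟩ := hi
    simp [hm3, Finsupp.add_apply, Finsupp.single_apply, Ne.symm hni0, Ne.symm hni1,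
      Ne.symm hni2]
  have hcomp : coeff m0 P = ∑ c ∈ range (k+1), (-1:K)^c * (k.choose c : K)^3 := by
    rw [hPeq, hm0split]
    rw [peel_many k hkeven i0 s hi0s R hfreeR m3 hm3s]
    exact core3 k i0 i1 i2 h01 h02 h12
  -- derive the contradiction
  set lz : ℤ := ∑ i ∈ Finset.range (k + 1), (-1 : ℤ) ^ i * (Nat.choose k i : ℤ) ^ 3 with hlz
  have hcast : ((lz : ℤ) : K) = ∑ c ∈ range (k+1), (-1:K)^c * (k.choose c : K)^3 := by
    rw [hlz]
    push_cast
    rfl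
  have hzero : ((lz : ℤ) : K) = 0 := by rw [hcast, ← hcomp, hcoeff0]
  obtain ⟨m, hm⟩ := hkeven
  have hd := dixon_ne m
  rw [show 2*m = k from by omega] at hd
  rcases hchar with hchar0 | ⟨p, hp, hcp, hdvd⟩
  · exact hd (by exact_mod_cast hzero)
  · exact hdvd ((CharP.intCast_eq_zero_iff K p lz).mp hzero)
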